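/- Generalised Newman lemma (Winkler–Buchberger to Church–Rosser): Let Σ be a generalised 2-polygraph that is terminating (equipped with a transitive Noetherian order > on objects such that every reduction step x ⤳ y implies x > y) and closed under congruence. If Σ has a Winkler–Buchberger structure, i.e., for every local peak y ⬿ x ⤳ z a rewrite zig-zag to some zig-zag from y to z all of whose intermediate objects are below x, then Σ has a Church–Rosser structure: every reduction zig-zag u from y to z can be rewritten into a valley y ⤳* x' ⬿* z. -/
import Mathlib


universe u v w

/-- Reduction sequences over a proof-relevant relation `R`: the inductive
reflexive-transitive closure. -/
inductive RSeq {A : Type u} (R : A → A → Type v) : A → A → Type (max u v)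
  | nil (x : A) : RSeq R x x
  | cons {x y z : A} : R x y → RSeq R y z → RSeq R x z

namespace RSeq

variable {A : Type u} {R : A → A → Type v}

/-- Concatenation of sequences. -/
def comp : ∀ {x y z : A}, RSeq R x y → RSeq R y z → RSeq R x z
  | _, _, _, .nil _, t => t
  | _, _, _, .cons s u, t => .cons s (comp u t)

/-- The length (number of steps) of a sequence. -/
def length : ∀ {x y : A}, RSeq R x y → Nat
  | _, _, .nil _ => 0
  | _, _, .cons _ u => u.length + 1

/-- The list of all objects visited by a sequence (including endpoints). -/
def objs : ∀ {x y : A}, RSeq R x y → List A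
  | x, _, .nil _ => [x]
  | x, _, .cons _ u => x :: objs u

/-- The inner (intermediate) objects of a sequence: all objects except the
first and the last. -/
def inner {x y : A} (u : RSeq R x y) : List A := (objs u).tail.dropLast

end RSeq

/-- The symmetric closure of a proof-relevant relation. -/
def RSym {A : Type u} (R : A → A → Type v) (x y : A) : Type v := Sum (R x y) (R y x)

/-- Inversion of a single symmetric-closure step. -/
def RSym.inv {A : Type u} {R : A → A → Type v} {x y : A} : RSym R x y → RSym R y x
  | .inl s => .inr s
  | .inr s => .inl s

/-- Reduction zig-zags: the symmetric-reflexive-transitive closure of `R`. -/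
abbrev ZigZag {A : Type u} (R : A → A → Type v) (x y : A) : Type (max u v) :=
  RSeq (RSym R) x y

/-- Inversion of a zig-zag. -/
def ZigZag.inv {A : Type u} {R : A → A → Type v} : ∀ {x y : A}, ZigZag R x y → ZigZag R y x
  | _, _, .nil x => .nil x
  | _, _, .cons s u => RSeq.comp (ZigZag.inv u) (.cons (RSym.inv s) (.nil _))

/-- The embedding of reduction sequences into zig-zags as positive zig-zags. -/
def RSeq.fwd {A : Type u} {R : A → A → Type v} : ∀ {x y : A}, RSeq R x y → ZigZag R x y
  | _, _, .nil x => .nil x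
  | _, _, .cons s u => .cons (Sum.inl s) (RSeq.fwd u)

/-- The local peak `y ⬿ x ⤳ z` determined by two reduction steps out of `x`,
viewed as a zig-zag from `y` to `z`. -/
def ZigZag.peak {A : Type u} {R : A → A → Type v} {x y z : A}
    (s : R x y) (t : R x z) : ZigZag R y z :=
  .cons (Sum.inr s) (.cons (Sum.inl t) (.nil z))

/-- Rewrite zig-zags `u ⇔* v` between parallel reduction zig-zags, relative to a
family `R2` of rewrite steps: the symmetric-reflexive-transitive closure of `R2`. -/
abbrev RW {A : Type u} {R : A → A → Type v}
    (R2 : ∀ (x y : A), ZigZag R x y → ZigZag R x y → Type w)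
    {x y : A} (u v : ZigZag R x y) : Type (max u v w) :=
  RSeq (RSym (R2 x y)) u v

namespace Newman
variable {A : Type u} {R : A → A → Type v}

theorem objs_ne_nil : ∀ {x y : A} (u : RSeq R x y), u.objs ≠ []
  | _, _, .nil _ => by simp [RSeq.objs]
  | _, _, .cons _ _ => by simp [RSeq.objs]

theorem objs_comp : ∀ {x y z : A} (u : RSeq R x y) (v : RSeq R y z),
    (u.comp v).objs = u.objs.dropLast ++ v.objs
  | _, _, _, .nil _, v => by simp [RSeq.comp, RSeq.objs]
  | _, _, _, .cons s u, v => by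
    simp [RSeq.comp, RSeq.objs, objs_comp u v, List.dropLast_cons_of_ne_nil (objs_ne_nil u)]

theorem mem_dropLast_objs : ∀ {x y : A} (p : RSeq R x y), ∀ m ∈ p.objs.dropLast,
    m = x ∨ m ∈ p.inner
  | _, _, .nil _ => by simp [RSeq.objs]
  | x, _, .cons s p => by
    intro m hm
    rw [RSeq.objs, List.dropLast_cons_of_ne_nil (objs_ne_nil p)] at hm
    rcases List.mem_cons.mp hm with h | h
    · exact Or.inl h
    · exact Or.inr (by simpa [RSeq.inner, RSeq.objs] using h)

theorem inv_fwd_snoc : ∀ {x y z : A} (q : RSeq R x y) (s : R y z),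
    ((q.comp (.cons s (.nil z))).fwd).inv = .cons (.inr s) q.fwd.inv
  | _, _, _, .nil _, s => rfl
  | _, _, _, .cons r q, s => by
    show RSeq.comp (((q.comp (.cons s (.nil _))).fwd).inv) _ = _
    rw [inv_fwd_snoc q s]
    rfl

/-- Decomposition of a zig-zag: either it is a valley, or it contains a local peak. -/
inductive Decomp : ∀ {y z : A}, ZigZag R y z → Type (max u v)
  | valley {y z : A} (u : ZigZag R y z) (x' : A) (p : RSeq R y x') (q : RSeq R z x')
      (h : u = p.fwd.comp q.fwd.inv) : Decomp u
  | peak {y z : A} (u : ZigZag R y z) (a b c : A) (u1 : ZigZag R y a) (s : R b a) (t : R b c)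
      (u2 : ZigZag R c z) (h : u = u1.comp ((ZigZag.peak s t).comp u2)) : Decomp u

def decomp : ∀ {y z : A} (u : ZigZag R y z), Decomp u
  | _, _, .nil x => .valley _ x (.nil x) (.nil x) rfl
  | _, _, .cons (.inl s) u' =>
    match decomp u' with
    | .valley _ x' p q h => .valley _ x' (.cons s p) q (by rw [h]; rfl)
    | .peak _ a b c u1 s' t u2 h => .peak _ a b c (.cons (.inl s) u1) s' t u2 (by rw [h]; rfl)
  | y, z, .cons (.inr s) u' =>
    match decomp u' with
    | .peak _ a b c u1 s' t u2 h => .peak _ a b c (.cons (.inr s) u1) s' t u2 (by rw [h]; rfl)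
    | .valley _ x' p q h =>
        match x', p, q, h with
        | _, .cons r p1, q, h =>
            .peak _ _ _ _ (.nil _) s r (p1.fwd.comp q.fwd.inv) (by rw [h]; rfl)
        | _, .nil _, q, h =>
            .valley _ y (.nil y) (q.comp (.cons s (.nil y)))
              (by rw [h, inv_fwd_snoc]; rfl)

end Newman

/-- Generalised Newman lemma (Winkler–Buchberger to Church–Rosser):
a terminating generalised 2-polygraph which is closed under congruence and has a
Winkler–Buchberger structure admits a Church–Rosser structure: every reduction
zig-zag `u` from `y` to `z` can be rewritten into a valley `y ⤳* x' ⬿* z`. -/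
theorem wb_to_churchRosser {A : Type u} (R : A → A → Type v)
    (R2 : ∀ (x y : A), ZigZag R x y → ZigZag R x y → Type w)
    -- terminating: a transitive Noetherian order `>` compatible with reduction steps
    (gt : A → A → Prop) (gt_trans : Transitive gt)
    (gt_noeth : WellFounded (fun a b => gt b a))
    (step_gt : ∀ {x y : A}, R x y → gt x y)
    -- closed under congruence: rewrite zig-zags can be whiskered by reduction zig-zags
    (congrClosed : ∀ {x y y' z : A} (u : ZigZag R x y) (v : ZigZag R y' z)
      {p q : ZigZag R y y'}, RW R2 p q →
      RW R2 (u.comp (p.comp v)) (u.comp (q.comp v)))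
    -- Winkler–Buchberger structure: every local peak rewrites to a zig-zag all of
    -- whose intermediate objects are below the apex
    (wb : ∀ {x y z : A} (s : R x y) (t : R x z),
      Σ (p : ZigZag R y z),
        PProd (∀ m ∈ RSeq.inner p, gt x m) (RW R2 (ZigZag.peak s t) p)) :
    ∀ {y z : A} (u : ZigZag R y z),
      Nonempty (Σ (x' : A) (p : RSeq R y x') (q : RSeq R z x'),
        RW R2 u (p.fwd.comp q.fwd.inv)) := by
  have wf : WellFounded (Relation.TransGen (Relation.CutExpand (fun a b => gt b a))) :=
    (WellFounded.cutExpand gt_noeth).transGen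
  have main : ∀ M : Multiset A, ∀ (y z : A) (u : ZigZag R y z), (u.objs : Multiset A) = M →
      Nonempty (Σ (x' : A) (p : RSeq R y x') (q : RSeq R z x'),
        RW R2 u (p.fwd.comp q.fwd.inv)) := by
    intro M
    induction M using wf.induction with
    | _ M IH =>
    intro y z u hM
    subst hM
    cases Newman.decomp u with
    | valley x' p q h =>
        exact ⟨⟨x', p, q, by rw [h]; exact .nil _⟩⟩
    | peak a b c u1 s t u2 h =>
        obtain ⟨p, hp⟩ := wb s t
        set v := u1.comp (p.comp u2) with hv
        have rw1 : RW R2 u v := by rw [h]; exact congrClosed u1 u2 hp.2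
        have hD : ∀ m ∈ p.objs.dropLast, gt b m := by
          intro m hm
          rcases Newman.mem_dropLast_objs p m hm with rfl | hm'
          · exact step_gt s
          · exact hp.1 m hm'
        have hu : (u.objs : Multiset A) =
            ((u1.objs.dropLast : Multiset A) + (u2.objs : Multiset A)) + ({a} + {b}) := by
          rw [h, Newman.objs_comp, Newman.objs_comp]
          simp only [← Multiset.coe_add, ← Multiset.cons_coe, ← Multiset.singleton_add,
            ZigZag.peak, RSeq.objs, List.dropLast]
          abel
        have hvobjs : (v.objs : Multiset A) =
            ((u1.objs.dropLast : Multiset A) + (u2.objs : Multiset A))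
              + (p.objs.dropLast : Multiset A) := by
          rw [hv, Newman.objs_comp, Newman.objs_comp]
          simp only [← Multiset.coe_add, ← Multiset.cons_coe, ← Multiset.singleton_add]
          abel
        have hdec : Relation.TransGen (Relation.CutExpand (fun a b => gt b a))
            (v.objs : Multiset A) (u.objs : Multiset A) := by
          rw [hu, hvobjs]
          set C := (u1.objs.dropLast : Multiset A) + (u2.objs : Multiset A)
          have step1 : Relation.CutExpand (fun a b => gt b a)
              ((C + {a}) + (p.objs.dropLast : Multiset A)) (C + ({a} + {b})) :=
            ⟨(p.objs.dropLast : Multiset A), b, fun m hm => hD m (by simpa using hm),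
              by abel⟩
          have step2 : Relation.CutExpand (fun a b => gt b a)
              (C + (p.objs.dropLast : Multiset A))
              ((C + {a}) + (p.objs.dropLast : Multiset A)) :=
            ⟨0, a, by simp, by abel⟩
          exact Relation.TransGen.head step2 (Relation.TransGen.single step1)
        obtain ⟨⟨x', P, Q, rw2⟩⟩ := IH (v.objs : Multiset A) hdec y z v rfl
        exact ⟨⟨x', P, Q, rw1.comp rw2⟩⟩
  intro y z u
  exact main (u.objs : Multiset A) y z u rfl
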